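/- Let z₀ ∈ ℝ and let τ₀ ∈ ℂ with |τ₀| = 1 be a simple root of the polynomial τ ↦ D(z₀,τ). Then ∂D/∂z(z₀,τ₀) ≠ 0 (equivalently, the analytic multiplier branch τ(z) through τ₀ defined by the implicit function theorem satisfies τ′(z₀) ≠ 0). -/

import Mathlib

open Matrix Polynomial

/-- Fundamental matrix-valued solutions of the Jacobi recursion
`y_{n+1} = a_n⁻¹ ((z I - b_n) y_n - a_{n-1}ᵀ y_{n-1})`. -/
noncomputable def matSol {m : ℕ} (a b : ℤ → Matrix (Fin m) (Fin m) ℝ) (z : ℂ)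
    (y0 y1 : Matrix (Fin m) (Fin m) ℂ) : ℕ → Matrix (Fin m) (Fin m) ℂ
  | 0 => y0
  | 1 => y1
  | n + 2 =>
      (((a ((n : ℤ) + 1))⁻¹).map Complex.ofReal) *
        ((z • (1 : Matrix (Fin m) (Fin m) ℂ) - (b ((n : ℤ) + 1)).map Complex.ofReal) *
            matSol a b z y0 y1 (n + 1) -
          ((a (n : ℤ)).map Complex.ofReal)ᵀ * matSol a b z y0 y1 n)

/-- The monodromy matrix `ℳ_p(z) = [[θ_p, φ_p], [θ_{p+1}, φ_{p+1}]]`. -/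
noncomputable def monodromy {m : ℕ} (a b : ℤ → Matrix (Fin m) (Fin m) ℝ) (p : ℕ) (z : ℂ) :
    Matrix (Fin m ⊕ Fin m) (Fin m ⊕ Fin m) ℂ :=
  Matrix.fromBlocks (matSol a b z 1 0 p) (matSol a b z 0 1 p)
    (matSol a b z 1 0 (p + 1)) (matSol a b z 0 1 (p + 1))

/-- `D(z,τ) = det(ℳ_p(z) - τ I_{2m})` as a function of `(z,τ)`. -/
noncomputable def Dfun {m : ℕ} (a b : ℤ → Matrix (Fin m) (Fin m) ℝ) (p : ℕ) (z τ : ℂ) : ℂ :=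
  (monodromy a b p z - τ • (1 : Matrix (Fin m ⊕ Fin m) (Fin m ⊕ Fin m) ℂ)).det

/-- The polynomial `τ ↦ D(z,τ)`. -/
noncomputable def DpolyTau {m : ℕ} (a b : ℤ → Matrix (Fin m) (Fin m) ℝ) (p : ℕ) (z : ℂ) :
    Polynomial ℂ :=
  ((monodromy a b p z).map Polynomial.C -
      (Polynomial.X : Polynomial ℂ) • (1 : Matrix (Fin m ⊕ Fin m) (Fin m ⊕ Fin m) (Polynomial ℂ))).det

noncomputable def matSolP {m : ℕ} (a b : ℤ → Matrix (Fin m) (Fin m) ℝ)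
    (y0 y1 : Matrix (Fin m) (Fin m) ℂ) : ℕ → Matrix (Fin m) (Fin m) (Polynomial ℂ)
  | 0 => y0.map C
  | 1 => y1.map C
  | n + 2 =>
      (((a ((n : ℤ) + 1))⁻¹).map (fun r => C (r : ℂ))) *
        (((X : Polynomial ℂ) • (1 : Matrix (Fin m) (Fin m) (Polynomial ℂ)) -
            (b ((n : ℤ) + 1)).map (fun r => C (r : ℂ))) * matSolP a b y0 y1 (n + 1) -
          ((a (n : ℤ)).map (fun r => C (r : ℂ)))ᵀ * matSolP a b y0 y1 n)

lemma matSolP_eval {m : ℕ} (a b : ℤ → Matrix (Fin m) (Fin m) ℝ)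
    (y0 y1 : Matrix (Fin m) (Fin m) ℂ) (z : ℂ) : ∀ n,
    (matSolP a b y0 y1 n).map (fun q => q.eval z) = matSol a b z y0 y1 n := by
  intro n
  induction n using Nat.twoStepInduction with
  | zero => ext i j; simp [matSolP, matSol]
  | one => ext i j; simp [matSolP, matSol]
  | more n ih1 ih2 =>
    show (matSolP a b y0 y1 (n+2)).map (fun q => q.eval z) = matSol a b z y0 y1 (n+2)
    rw [matSolP, matSol]
    have hmm : ∀ M : Matrix (Fin m) (Fin m) (Polynomial ℂ),
        M.map (fun q => q.eval z) = (evalRingHom z).mapMatrix M := fun _ => rfl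
    simp only [hmm, _root_.map_mul, map_sub]
    simp only [← hmm]
    rw [ih1, ih2]
    congr 1
    · ext i j; simp [Matrix.map_apply]
    congr 2
    · ext i j
      by_cases h : i = j <;>
        simp [Matrix.map_apply, Matrix.smul_apply, Matrix.one_apply, Matrix.sub_apply, h]
    · ext i j; simp [Matrix.map_apply]

lemma matSol_rec {m : ℕ} (a b : ℤ → Matrix (Fin m) (Fin m) ℝ)
    (ha_inv : ∀ n : ℤ, IsUnit (a n).det) (z : ℂ) (y0 y1 : Matrix (Fin m) (Fin m) ℂ) (k : ℕ) :
    ((a ((k : ℤ) + 1)).map Complex.ofReal) * matSol a b z y0 y1 (k + 2)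
      = (z • (1 : Matrix (Fin m) (Fin m) ℂ) - (b ((k : ℤ) + 1)).map Complex.ofReal) *
          matSol a b z y0 y1 (k + 1)
        - ((a (k : ℤ)).map Complex.ofReal)ᵀ * matSol a b z y0 y1 k := by
  rw [matSol, ← Matrix.mul_assoc]
  have h1 : (a ((k : ℤ) + 1)).map Complex.ofReal * ((a ((k : ℤ) + 1))⁻¹).map Complex.ofReal
      = 1 := by
    have : ((a ((k : ℤ) + 1)) * (a ((k : ℤ) + 1))⁻¹).map (Complex.ofRealHom : ℝ →+* ℂ)
        = (a ((k : ℤ) + 1)).map Complex.ofRealHom * ((a ((k : ℤ) + 1))⁻¹).map Complex.ofRealHom :=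
      Matrix.map_mul
    rw [Matrix.mul_nonsing_inv _ (ha_inv _)] at this
    have e : ∀ M : Matrix (Fin m) (Fin m) ℝ,
        M.map (Complex.ofRealHom : ℝ →+* ℂ) = M.map Complex.ofReal := fun _ => rfl
    simp only [e] at this
    rw [← this]
    ext i j
    by_cases h : i = j <;> simp [Matrix.one_apply, h]
  rw [h1, Matrix.one_mul]

lemma matSolP_rec {m : ℕ} (a b : ℤ → Matrix (Fin m) (Fin m) ℝ)
    (ha_inv : ∀ n : ℤ, IsUnit (a n).det) (y0 y1 : Matrix (Fin m) (Fin m) ℂ) (k : ℕ) :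
    ((a ((k : ℤ) + 1)).map (fun r => C (r : ℂ))) * matSolP a b y0 y1 (k + 2)
      = ((X : Polynomial ℂ) • (1 : Matrix (Fin m) (Fin m) (Polynomial ℂ)) -
            (b ((k : ℤ) + 1)).map (fun r => C (r : ℂ))) * matSolP a b y0 y1 (k + 1)
        - ((a (k : ℤ)).map (fun r => C (r : ℂ)))ᵀ * matSolP a b y0 y1 k := by
  rw [matSolP, ← Matrix.mul_assoc]
  have h1 : (a ((k : ℤ) + 1)).map (fun r => C (r : ℂ)) *
      ((a ((k : ℤ) + 1))⁻¹).map (fun r => C (r : ℂ)) = 1 := by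
    have : ((a ((k : ℤ) + 1)) * (a ((k : ℤ) + 1))⁻¹).map
          ((Polynomial.C.comp Complex.ofRealHom : ℝ →+* Polynomial ℂ))
        = (a ((k : ℤ) + 1)).map (Polynomial.C.comp Complex.ofRealHom) *
          ((a ((k : ℤ) + 1))⁻¹).map (Polynomial.C.comp Complex.ofRealHom) :=
      Matrix.map_mul
    rw [Matrix.mul_nonsing_inv _ (ha_inv _)] at this
    have e : ∀ M : Matrix (Fin m) (Fin m) ℝ,
        M.map (Polynomial.C.comp Complex.ofRealHom) = M.map (fun r => C (r : ℂ)) := fun _ => rfl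
    simp only [e] at this
    rw [← this]
    ext i j
    by_cases h : i = j <;> simp [Matrix.one_apply, h]
  rw [h1, Matrix.one_mul]

/-- entrywise polynomial derivative Leibniz rule for matrix products -/
lemma map_derivative_mul {m : ℕ} (M N : Matrix (Fin m) (Fin m) (Polynomial ℂ)) :
    (M * N).map (fun q => derivative q)
      = M.map (fun q => derivative q) * N + M * N.map (fun q => derivative q) := by
  ext i j
  simp [Matrix.mul_apply, Matrix.map_apply, Matrix.add_apply, derivative_mul,
    Finset.sum_add_distrib]

lemma dot_symm {m : ℕ} (S : Matrix (Fin m) (Fin m) ℂ) (hS : Sᵀ = S) (x y : Fin m → ℂ) :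
    x ⬝ᵥ (S *ᵥ y) = (S *ᵥ x) ⬝ᵥ y := by
  rw [Matrix.dotProduct_mulVec]
  congr 1
  rw [← Matrix.vecMul_transpose, hS]

lemma wr_step {m : ℕ} (A S : ℕ → Matrix (Fin m) (Fin m) ℂ) (hS : ∀ k, (S k)ᵀ = S k)
    (f h s : ℕ → Fin m → ℂ)
    (hf : ∀ k, A (k+1) *ᵥ f (k+2) = S (k+1) *ᵥ f (k+1) - (A k)ᵀ *ᵥ f k)
    (hh : ∀ k, A (k+1) *ᵥ h (k+2) = S (k+1) *ᵥ h (k+1) - (A k)ᵀ *ᵥ h k + s (k+1)) (k : ℕ) :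
    f (k+1) ⬝ᵥ (A (k+1) *ᵥ h (k+2)) - f (k+2) ⬝ᵥ ((A (k+1))ᵀ *ᵥ h (k+1))
      = (f k ⬝ᵥ (A k *ᵥ h (k+1)) - f (k+1) ⬝ᵥ ((A k)ᵀ *ᵥ h k)) + f (k+1) ⬝ᵥ s (k+1) := by
  have h2 : f (k+2) ⬝ᵥ ((A (k+1))ᵀ *ᵥ h (k+1)) = (A (k+1) *ᵥ f (k+2)) ⬝ᵥ h (k+1) := by
    rw [Matrix.dotProduct_mulVec, Matrix.vecMul_transpose]
  have h3 : ((A k)ᵀ *ᵥ f k) ⬝ᵥ h (k+1) = f k ⬝ᵥ (A k *ᵥ h (k+1)) := by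
    rw [Matrix.mulVec_transpose, ← Matrix.dotProduct_mulVec]
  have h4 : f (k+1) ⬝ᵥ (S (k+1) *ᵥ h (k+1)) = (S (k+1) *ᵥ f (k+1)) ⬝ᵥ h (k+1) :=
    dot_symm _ (hS (k+1)) _ _
  rw [hh k, h2, hf k]
  simp only [dotProduct_add, dotProduct_sub, sub_dotProduct]
  rw [h3, h4]
  ring

lemma wr_tel {m : ℕ} (A S : ℕ → Matrix (Fin m) (Fin m) ℂ) (hS : ∀ k, (S k)ᵀ = S k)
    (f h s : ℕ → Fin m → ℂ)
    (hf : ∀ k, A (k+1) *ᵥ f (k+2) = S (k+1) *ᵥ f (k+1) - (A k)ᵀ *ᵥ f k)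
    (hh : ∀ k, A (k+1) *ᵥ h (k+2) = S (k+1) *ᵥ h (k+1) - (A k)ᵀ *ᵥ h k + s (k+1)) (N : ℕ) :
    f N ⬝ᵥ (A N *ᵥ h (N+1)) - f (N+1) ⬝ᵥ ((A N)ᵀ *ᵥ h N)
      = (f 0 ⬝ᵥ (A 0 *ᵥ h 1) - f 1 ⬝ᵥ ((A 0)ᵀ *ᵥ h 0))
        + ∑ k ∈ Finset.range N, f (k+1) ⬝ᵥ s (k+1) := by
  induction N with
  | zero => simp
  | succ n ih =>
    rw [Finset.sum_range_succ, ← add_assoc, ← ih]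
    exact wr_step A S hS f h s hf hh n

lemma map_derivative_sub {m : ℕ} (M N : Matrix (Fin m) (Fin m) (Polynomial ℂ)) :
    (M - N).map (fun q => derivative q)
      = M.map (fun q => derivative q) - N.map (fun q => derivative q) := by
  ext i j; simp [Matrix.map_apply, Matrix.sub_apply]

lemma matSolV_rec {m : ℕ} (a b : ℤ → Matrix (Fin m) (Fin m) ℝ)
    (ha_inv : ∀ n : ℤ, IsUnit (a n).det) (y0 y1 : Matrix (Fin m) (Fin m) ℂ) (z₀ : ℂ) (k : ℕ) :
    ((a ((k : ℤ) + 1)).map Complex.ofReal) *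
        (((matSolP a b y0 y1 (k+2)).map (fun q => derivative q)).map (fun q => q.eval z₀))
      = matSol a b z₀ y0 y1 (k+1)
        + ((z₀ • (1 : Matrix (Fin m) (Fin m) ℂ) - (b ((k : ℤ) + 1)).map Complex.ofReal) *
            (((matSolP a b y0 y1 (k+1)).map (fun q => derivative q)).map (fun q => q.eval z₀))
        - ((a (k : ℤ)).map Complex.ofReal)ᵀ *
            (((matSolP a b y0 y1 k).map (fun q => derivative q)).map (fun q => q.eval z₀))) := by
  have h0 := matSolP_rec a b ha_inv y0 y1 k
  have hAP1D : ((a ((k : ℤ) + 1)).map (fun r => C (r : ℂ))).map (fun q => derivative q)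
      = 0 := by ext i j; simp [Matrix.map_apply]
  have hAP0D : (((a (k : ℤ)).map (fun r => C (r : ℂ)))ᵀ).map (fun q => derivative q) = 0 := by
    ext i j; simp [Matrix.map_apply, Matrix.transpose_apply]
  have hXB : (((X : Polynomial ℂ) • (1 : Matrix (Fin m) (Fin m) (Polynomial ℂ))).map
        (fun q => derivative q))
      - (((b ((k : ℤ) + 1)).map (fun r => C (r : ℂ))).map (fun q => derivative q)) = 1 := by
    ext i j
    by_cases h : i = j <;>
      simp [Matrix.map_apply, Matrix.sub_apply, Matrix.smul_apply, Matrix.one_apply, h]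
  have hpoly : ((a ((k : ℤ) + 1)).map (fun r => C (r : ℂ))) *
        ((matSolP a b y0 y1 (k+2)).map (fun q => derivative q))
      = matSolP a b y0 y1 (k+1)
        + (((X : Polynomial ℂ) • (1 : Matrix (Fin m) (Fin m) (Polynomial ℂ)) -
            (b ((k : ℤ) + 1)).map (fun r => C (r : ℂ))) *
              ((matSolP a b y0 y1 (k+1)).map (fun q => derivative q))
          - ((a (k : ℤ)).map (fun r => C (r : ℂ)))ᵀ *
              ((matSolP a b y0 y1 k).map (fun q => derivative q))) := by
    have hD := congrArg (fun M : Matrix (Fin m) (Fin m) (Polynomial ℂ) =>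
      M.map (fun q => derivative q)) h0
    simp only [map_derivative_sub, map_derivative_mul] at hD
    rw [hAP1D, hXB, hAP0D] at hD
    simp only [Matrix.zero_mul, Matrix.one_mul, zero_add] at hD
    rw [hD]
    abel
  have hev := congrArg (fun M : Matrix (Fin m) (Fin m) (Polynomial ℂ) =>
    (evalRingHom z₀).mapMatrix M) hpoly
  simp only [_root_.map_mul, _root_.map_add, map_sub] at hev
  have hmm : ∀ M : Matrix (Fin m) (Fin m) (Polynomial ℂ),
      (evalRingHom z₀).mapMatrix M = M.map (fun q => q.eval z₀) := fun _ => rfl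
  simp only [hmm] at hev
  have e1 : ((a ((k : ℤ) + 1)).map (fun r => C (r : ℂ))).map (fun q => q.eval z₀)
      = (a ((k : ℤ) + 1)).map Complex.ofReal := by
    ext i j; simp [Matrix.map_apply]
  have e2 : (((a (k : ℤ)).map (fun r => C (r : ℂ)))ᵀ).map (fun q => q.eval z₀)
      = ((a (k : ℤ)).map Complex.ofReal)ᵀ := by
    ext i j; simp [Matrix.map_apply, Matrix.transpose_apply]
  have e3a : (((X : Polynomial ℂ) • (1 : Matrix (Fin m) (Fin m) (Polynomial ℂ))).map
      (fun q => q.eval z₀)) = z₀ • (1 : Matrix (Fin m) (Fin m) ℂ) := by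
    ext i j
    by_cases h : i = j <;> simp [Matrix.map_apply, Matrix.smul_apply, Matrix.one_apply, h]
  have e3b : ((b ((k : ℤ) + 1)).map (fun r => C (r : ℂ))).map (fun q => q.eval z₀)
      = (b ((k : ℤ) + 1)).map Complex.ofReal := by
    ext i j; simp [Matrix.map_apply]
  rw [e1, e2, e3a, e3b, matSolP_eval] at hev
  exact hev

lemma det_updateColumn_one {ι : Type*} [Fintype ι] [DecidableEq ι] (c₀ : ι) (ψ : ι → ℂ) :
    ((1 : Matrix ι ι ℂ).updateCol c₀ ψ).det = ψ c₀ := by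
  rw [← Matrix.cramer_apply, Matrix.cramer_one]
  rfl

lemma det_updateRow_one {ι : Type*} [Fintype ι] [DecidableEq ι] (r₀ : ι) (w : ι → ℂ) :
    ((1 : Matrix ι ι ℂ).updateRow r₀ w).det = w r₀ := by
  have h : (1 : Matrix ι ι ℂ).updateRow r₀ w = ((1 : Matrix ι ι ℂ).updateCol r₀ w)ᵀ := by
    rw [← Matrix.updateRow_transpose, Matrix.transpose_one]
  rw [h, Matrix.det_transpose, det_updateColumn_one]

lemma rootMultiplicity_one_facts (q : Polynomial ℂ) (τ : ℂ) (h : q.rootMultiplicity τ = 1) :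
    q.eval τ = 0 ∧ q.derivative.eval τ ≠ 0 := by
  have hq0 : q ≠ 0 := by
    intro h0
    rw [h0, Polynomial.rootMultiplicity_zero] at h
    exact one_ne_zero h.symm
  have h1 : (X - C τ) ∣ q := by
    have := Polynomial.pow_rootMultiplicity_dvd q τ
    rwa [h, pow_one] at this
  obtain ⟨g, hg⟩ := h1
  have h2 : ¬ (X - C τ) ^ 2 ∣ q := by
    have := Polynomial.pow_rootMultiplicity_not_dvd hq0 τ
    rwa [h] at this
  constructor
  · rw [hg]; simp
  · rw [hg, derivative_mul]
    simp only [derivative_X_sub_C, one_mul, Polynomial.eval_add, Polynomial.eval_mul]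
    simp only [Polynomial.eval_sub, Polynomial.eval_X, Polynomial.eval_C, sub_self, zero_mul,
      add_zero]
    intro hg0
    apply h2
    obtain ⟨g', hg'⟩ := Polynomial.dvd_iff_isRoot.mpr hg0
    exact ⟨g', by rw [hg, hg', pow_two, mul_assoc]⟩

lemma det_updateRow_single_eq {ι : Type*} [Fintype ι] [DecidableEq ι]
    (A : Matrix ι ι ℂ) (r₀ c₀ : ι) (κ₀ : ι → ℂ) (hcol : ∀ i, A i c₀ = 0) :
    ((A.updateCol c₀ κ₀).updateRow r₀ (Pi.single c₀ 1)).det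
      = (A.updateRow r₀ (Pi.single c₀ 1)).det := by
  set E := A.updateRow r₀ (Pi.single c₀ 1) with hE
  have hF : (A.updateCol c₀ κ₀).updateRow r₀ (Pi.single c₀ 1)
      = E.updateCol c₀ (fun i => if i = r₀ then 1 else κ₀ i) := by
    ext i j
    by_cases hi : i = r₀ <;> by_cases hj : j = c₀ <;>
      simp [hE, hi, hj, Matrix.updateRow_apply, Matrix.updateCol_apply, Pi.single_apply]
  rw [hF]
  have hv : (fun i => if i = r₀ then (1:ℂ) else κ₀ i)
      = Pi.single r₀ 1 + (fun i => if i = r₀ then 0 else κ₀ i) := by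
    funext i
    by_cases hi : i = r₀ <;> simp [hi, Pi.single_apply]
  rw [hv, Matrix.det_updateCol_add]
  have h1 : E.updateCol c₀ (Pi.single r₀ 1) = E := by
    ext i j
    by_cases hj : j = c₀
    · subst hj
      by_cases hi : i = r₀ <;>
        simp [hE, hi, Matrix.updateCol_apply, Matrix.updateRow_apply, Pi.single_apply, hcol i]
    · simp [Matrix.updateCol_apply, hj]
  have h2 : (E.updateCol c₀ (fun i => if i = r₀ then 0 else κ₀ i)).det = 0 := by
    apply Matrix.det_eq_zero_of_row_eq_zero r₀
    intro j
    by_cases hj : j = c₀ <;>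
      simp [hE, hj, Matrix.updateCol_apply, Matrix.updateRow_apply, Pi.single_apply]
  rw [h1, h2, add_zero]

lemma key_det_deriv {ι : Type*} [Fintype ι] [DecidableEq ι] (N : Matrix ι ι (Polynomial ℂ))
    (z₀ : ℂ) (r₀ c₀ : ι) (hrow : ∀ j, (N r₀ j).eval z₀ = 0) (hcol : ∀ i, (N i c₀).eval z₀ = 0) :
    (N.det).derivative.eval z₀ =
      ((N r₀ c₀).derivative.eval z₀) * (N.map (fun q => q.eval z₀)).adjugate c₀ r₀ := by
  have hdvd : ∀ i, ∃ q, N i c₀ = (X - C z₀) * q := by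
    intro i
    exact (dvd_iff_isRoot.mpr (hcol i)).elim fun q hq => ⟨q, hq⟩
  choose κ hκ using hdvd
  set A : Matrix ι ι ℂ := N.map (fun q => q.eval z₀) with hA
  have hAcol : ∀ i, A i c₀ = 0 := fun i => hcol i
  have hArow : ∀ j, A r₀ j = 0 := fun j => hrow j
  -- factor the column
  have hNup : N = N.updateCol c₀ ((X - C z₀) • κ) := by
    ext i j
    by_cases hj : j = c₀
    · subst hj; simp [Matrix.updateCol_apply, hκ i]
    · simp [Matrix.updateCol_apply, hj]
  have hdet : N.det = (X - C z₀) * (N.updateCol c₀ κ).det := by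
    conv_lhs => rw [hNup]
    rw [Matrix.det_updateCol_smul]
  have hder : (N.det).derivative.eval z₀ = ((N.updateCol c₀ κ).det).eval z₀ := by
    rw [hdet, derivative_mul]
    simp
  rw [hder]
  have hmap : ((N.updateCol c₀ κ).det).eval z₀
      = (A.updateCol c₀ (fun i => (κ i).eval z₀)).det := by
    rw [← Polynomial.coe_evalRingHom, RingHom.map_det]
    congr 1
    rw [RingHom.mapMatrix_apply, Matrix.map_updateCol]
    rfl
  rw [hmap]
  set κ₀ : ι → ℂ := fun i => (κ i).eval z₀ with hκ₀
  -- row r₀ of the updated matrix is κ₀ r₀ • single c₀ 1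
  set B := A.updateCol c₀ κ₀ with hB
  have hBrow : B = B.updateRow r₀ (κ₀ r₀ • (Pi.single c₀ (1:ℂ) : ι → ℂ)) := by
    ext i j
    by_cases hi : i = r₀
    · subst hi
      by_cases hj : j = c₀ <;>
        simp [hB, hj, Matrix.updateRow_apply, Matrix.updateCol_apply, Pi.single_apply,
          hArow j]
    · simp [Matrix.updateRow_apply, hi]
  have hdetB : B.det = κ₀ r₀ * (B.updateRow r₀ (Pi.single c₀ (1:ℂ))).det := by
    conv_lhs => rw [hBrow]
    rw [Matrix.det_updateRow_smul]
  rw [hdetB, hB, det_updateRow_single_eq A r₀ c₀ κ₀ hAcol]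
  have hκr : κ₀ r₀ = (N r₀ c₀).derivative.eval z₀ := by
    rw [hκ r₀, derivative_mul]
    simp [hκ₀]
  rw [hκr, Matrix.adjugate_apply]


/-- polynomial-in-z monodromy matrix -/
noncomputable def polyMon {m : ℕ} (a b : ℤ → Matrix (Fin m) (Fin m) ℝ) (p : ℕ) :
    Matrix (Fin m ⊕ Fin m) (Fin m ⊕ Fin m) (Polynomial ℂ) :=
  Matrix.fromBlocks (matSolP a b 1 0 p) (matSolP a b 0 1 p)
    (matSolP a b 1 0 (p + 1)) (matSolP a b 0 1 (p + 1))

lemma polyMon_eval {m : ℕ} (a b : ℤ → Matrix (Fin m) (Fin m) ℝ) (p : ℕ) (z : ℂ) :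
    (polyMon a b p).map (fun q => q.eval z) = monodromy a b p z := by
  unfold polyMon monodromy
  rw [Matrix.fromBlocks_map]
  rw [matSolP_eval, matSolP_eval, matSolP_eval, matSolP_eval]

lemma matSol_vec_rec {m : ℕ} (a b : ℤ → Matrix (Fin m) (Fin m) ℝ)
    (ha_inv : ∀ n : ℤ, IsUnit (a n).det) (z : ℂ) (y0 y1 : Matrix (Fin m) (Fin m) ℂ)
    (c : Fin m → ℂ) (k : ℕ) :
    ((a ((k : ℤ) + 1)).map Complex.ofReal) *ᵥ (matSol a b z y0 y1 (k+2) *ᵥ c)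
      = (z • (1 : Matrix (Fin m) (Fin m) ℂ) - (b ((k : ℤ) + 1)).map Complex.ofReal) *ᵥ
          (matSol a b z y0 y1 (k+1) *ᵥ c)
        - ((a (k : ℤ)).map Complex.ofReal)ᵀ *ᵥ (matSol a b z y0 y1 k *ᵥ c) := by
  rw [Matrix.mulVec_mulVec, matSol_rec a b ha_inv, Matrix.sub_mulVec,
    ← Matrix.mulVec_mulVec, ← Matrix.mulVec_mulVec]

lemma matSolV_vec_rec {m : ℕ} (a b : ℤ → Matrix (Fin m) (Fin m) ℝ)
    (ha_inv : ∀ n : ℤ, IsUnit (a n).det) (y0 y1 : Matrix (Fin m) (Fin m) ℂ) (z₀ : ℂ)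
    (c : Fin m → ℂ) (k : ℕ) :
    ((a ((k : ℤ) + 1)).map Complex.ofReal) *ᵥ
        ((((matSolP a b y0 y1 (k+2)).map (fun q => derivative q)).map (fun q => q.eval z₀)) *ᵥ c)
      = matSol a b z₀ y0 y1 (k+1) *ᵥ c
        + ((z₀ • (1 : Matrix (Fin m) (Fin m) ℂ) - (b ((k : ℤ) + 1)).map Complex.ofReal) *ᵥ
            ((((matSolP a b y0 y1 (k+1)).map (fun q => derivative q)).map
              (fun q => q.eval z₀)) *ᵥ c)
        - ((a (k : ℤ)).map Complex.ofReal)ᵀ *ᵥ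
            ((((matSolP a b y0 y1 k).map (fun q => derivative q)).map (fun q => q.eval z₀)) *ᵥ c)) := by
  rw [Matrix.mulVec_mulVec, matSolV_rec a b ha_inv y0 y1 z₀ k, Matrix.add_mulVec,
    Matrix.sub_mulVec, ← Matrix.mulVec_mulVec, ← Matrix.mulVec_mulVec]

lemma mulVec_conj {m : ℕ} (M : Matrix (Fin m) (Fin m) ℂ)
    (hM : ∀ i j, (starRingEnd ℂ) (M i j) = M i j) (x : Fin m → ℂ) :
    M *ᵥ (fun i => (starRingEnd ℂ) (x i)) = fun i => (starRingEnd ℂ) ((M *ᵥ x) i) := by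
  funext i
  simp only [Matrix.mulVec, dotProduct, map_sum, _root_.map_mul]
  apply Finset.sum_congr rfl
  intro j _
  rw [hM i j]


set_option maxHeartbeats 2000000 in
/-- If `z₀` is real and `τ₀` with `|τ₀| = 1` is a simple root of `τ ↦ D(z₀,τ)`,
then `∂D/∂z (z₀,τ₀) ≠ 0`. -/
theorem simple_unimodular_multiplier_z_derivative_ne_zero (m p : ℕ) (hm : 1 ≤ m) (hp : 1 ≤ p)
    (a b : ℤ → Matrix (Fin m) (Fin m) ℝ)
    (ha_per : ∀ n : ℤ, a (n + p) = a n) (hb_per : ∀ n : ℤ, b (n + p) = b n)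
    (hb_sym : ∀ n : ℤ, (b n)ᵀ = b n) (ha_inv : ∀ n : ℤ, IsUnit (a n).det)
    (z₀ : ℝ) (τ₀ : ℂ) (hτ₀ : ‖τ₀‖ = 1)
    (hsimple : (DpolyTau a b p (z₀ : ℂ)).rootMultiplicity τ₀ = 1) :
    deriv (fun z : ℂ => Dfun a b p z τ₀) (z₀ : ℂ) ≠ 0 := by
  have hτc : (starRingEnd ℂ) τ₀ * τ₀ = 1 := by
    rw [mul_comm, Complex.mul_conj]
    norm_cast
    rw [Complex.normSq_eq_norm_sq, hτ₀]; norm_num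
  have hτ0 : τ₀ ≠ 0 := by
    intro h; rw [h] at hτ₀; simp at hτ₀
  set zc : ℂ := (z₀ : ℂ) with hzc
  set M₀ : Matrix (Fin m ⊕ Fin m) (Fin m ⊕ Fin m) ℂ := monodromy a b p zc with hM₀
  set A₀ : Matrix (Fin m ⊕ Fin m) (Fin m ⊕ Fin m) ℂ := M₀ - τ₀ • 1 with hA₀
  obtain ⟨hDTroot, hDTder⟩ := rootMultiplicity_one_facts _ _ hsimple
  have hDeval : ∀ τ : ℂ, (DpolyTau a b p zc).eval τ
      = (M₀ - τ • (1 : Matrix (Fin m ⊕ Fin m) (Fin m ⊕ Fin m) ℂ)).det := by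
    intro τ
    unfold DpolyTau
    rw [← Polynomial.coe_evalRingHom, RingHom.map_det]
    congr 1
    ext i j
    by_cases h : i = j <;>
      simp [Matrix.map_apply, Matrix.sub_apply, Matrix.smul_apply, Matrix.one_apply, h, hM₀]
  have hdetA₀ : A₀.det = 0 := by
    rw [hA₀, ← hDeval τ₀]; exact hDTroot
  obtain ⟨ψ, hψ0, hψ⟩ : ∃ v, v ≠ 0 ∧ A₀ *ᵥ v = 0 := by
    obtain ⟨v, hv0, hv⟩ := Matrix.exists_mulVec_eq_zero_iff.mpr hdetA₀
    exact ⟨v, hv0, hv⟩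
  have hMψ : M₀ *ᵥ ψ = τ₀ • ψ := by
    have h := hψ
    rw [hA₀, Matrix.sub_mulVec, sub_eq_zero] at h
    rw [h, Matrix.smul_mulVec, Matrix.one_mulVec]
  -- the solution sequences
  set x0 : Fin m → ℂ := fun i => ψ (Sum.inl i) with hx0
  set x1 : Fin m → ℂ := fun i => ψ (Sum.inr i) with hx1
  set u : ℕ → Fin m → ℂ :=
    fun n => matSol a b zc 1 0 n *ᵥ x0 + matSol a b zc 0 1 n *ᵥ x1 with hu_def
  set g : ℕ → Fin m → ℂ := fun n =>
      (((matSolP a b (1 : Matrix (Fin m) (Fin m) ℂ) 0 n).map (fun q => derivative q)).map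
        (fun q => q.eval zc)) *ᵥ x0
    + (((matSolP a b (0 : Matrix (Fin m) (Fin m) ℂ) 1 n).map (fun q => derivative q)).map
        (fun q => q.eval zc)) *ᵥ x1 with hg_def
  set v : ℕ → Fin m → ℂ := fun n i => (starRingEnd ℂ) (u n i) with hv_def
  set AN : ℕ → Matrix (Fin m) (Fin m) ℂ := fun k => (a (k : ℤ)).map Complex.ofReal with hAN
  set SN : ℕ → Matrix (Fin m) (Fin m) ℂ :=
    fun k => zc • (1 : Matrix (Fin m) (Fin m) ℂ) - (b (k : ℤ)).map Complex.ofReal with hSN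
  have hcast : ∀ k : ℕ, ((k + 1 : ℕ) : ℤ) = (k : ℤ) + 1 := by intro k; push_cast; ring
  have hSN_symm : ∀ k, (SN k)ᵀ = SN k := by
    intro k
    rw [hSN]
    simp only
    rw [Matrix.transpose_sub, Matrix.transpose_smul, Matrix.transpose_one,
      ← Matrix.transpose_map, hb_sym]
  have hu_rec : ∀ k, AN (k+1) *ᵥ u (k+2) = SN (k+1) *ᵥ u (k+1) - (AN k)ᵀ *ᵥ u k := by
    intro k
    simp only [hAN, hSN, hu_def, hcast k]
    rw [Matrix.mulVec_add, Matrix.mulVec_add, Matrix.mulVec_add,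
      matSol_vec_rec a b ha_inv zc 1 0 x0 k, matSol_vec_rec a b ha_inv zc 0 1 x1 k]
    abel
  have hg_rec : ∀ k, AN (k+1) *ᵥ g (k+2) = SN (k+1) *ᵥ g (k+1) - (AN k)ᵀ *ᵥ g k + u (k+1) := by
    intro k
    simp only [hAN, hSN, hu_def, hg_def, hcast k]
    rw [Matrix.mulVec_add, Matrix.mulVec_add, Matrix.mulVec_add,
      matSolV_vec_rec a b ha_inv 1 0 zc x0 k, matSolV_vec_rec a b ha_inv 0 1 zc x1 k]
    abel
  have hg0 : g 0 = 0 := by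
    funext i
    simp [hg_def, matSolP, Matrix.map_apply, Matrix.mulVec, dotProduct,
      Matrix.one_apply, apply_ite (fun q : Polynomial ℂ => derivative q)]
  have hg1 : g 1 = 0 := by
    funext i
    simp [hg_def, matSolP, Matrix.map_apply, Matrix.mulVec, dotProduct,
      Matrix.one_apply, apply_ite (fun q : Polynomial ℂ => derivative q)]
  have hu0 : u 0 = x0 := by
    funext i
    simp [hu_def, matSol, Matrix.one_mulVec, Matrix.zero_mulVec]
  have hu1 : u 1 = x1 := by
    funext i
    simp [hu_def, matSol, Matrix.one_mulVec, Matrix.zero_mulVec]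
  -- conjugate solution
  have hANconj : ∀ k i j, (starRingEnd ℂ) (AN k i j) = AN k i j := by
    intro k i j; simp [hAN, Matrix.map_apply, Complex.conj_ofReal]
  have hANTconj : ∀ k i j, (starRingEnd ℂ) ((AN k)ᵀ i j) = (AN k)ᵀ i j := by
    intro k i j; simp [hAN, Matrix.map_apply, Matrix.transpose_apply, Complex.conj_ofReal]
  have hSNconj : ∀ k i j, (starRingEnd ℂ) (SN k i j) = SN k i j := by
    intro k i j
    by_cases h : i = j <;>
      simp [hSN, Matrix.sub_apply, Matrix.smul_apply, Matrix.map_apply, Matrix.one_apply,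
        map_sub, h, hzc, Complex.conj_ofReal]
  have hv_rec : ∀ k, AN (k+1) *ᵥ v (k+2) = SN (k+1) *ᵥ v (k+1) - (AN k)ᵀ *ᵥ v k := by
    intro k
    have e : ∀ n : ℕ, v n = fun i => (starRingEnd ℂ) (u n i) := fun _ => rfl
    rw [e, e, e, mulVec_conj _ (hANconj (k+1)), mulVec_conj _ (hSNconj (k+1)),
      mulVec_conj _ (hANTconj k)]
    funext i
    have := congrFun (hu_rec k) i
    simp only [Pi.sub_apply] at this ⊢
    rw [this, map_sub]
  -- Floquet relations
  have hup : u p = fun i => τ₀ * x0 i := by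
    funext i
    have h1 := congrFun hMψ (Sum.inl i)
    rw [hM₀] at h1
    unfold monodromy at h1
    rw [Matrix.fromBlocks_mulVec] at h1
    simpa [hu_def, hx0, hx1, Function.comp_def, Pi.smul_apply, smul_eq_mul] using h1
  have hup1 : u (p+1) = fun i => τ₀ * x1 i := by
    funext i
    have h1 := congrFun hMψ (Sum.inr i)
    rw [hM₀] at h1
    unfold monodromy at h1
    rw [Matrix.fromBlocks_mulVec] at h1
    simpa [hu_def, hx0, hx1, Function.comp_def, Pi.smul_apply, smul_eq_mul] using h1
  -- left eigenvector w
  set A0C : Matrix (Fin m) (Fin m) ℂ := (a 0).map Complex.ofReal with hA0C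
  have hAN0 : AN 0 = A0C := by rw [hAN, hA0C]; norm_num
  have hANp : AN p = A0C := by
    rw [hAN, hA0C]
    have h := ha_per 0
    rw [zero_add] at h
    simp only [h]
  set w : (Fin m ⊕ Fin m) → ℂ :=
    Sum.elim (fun j => -((A0C *ᵥ v 1) j)) (fun j => (v 0 ᵥ* A0C) j) with hw
  have hw_dot : ∀ c : (Fin m ⊕ Fin m) → ℂ,
      w ⬝ᵥ c = v 0 ⬝ᵥ (A0C *ᵥ (fun i => c (Sum.inr i)))
        - v 1 ⬝ᵥ (A0Cᵀ *ᵥ (fun i => c (Sum.inl i))) := by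
    intro c
    rw [Matrix.dotProduct_mulVec (v 0), Matrix.dotProduct_mulVec (v 1), Matrix.vecMul_transpose]
    simp only [dotProduct, hw]
    rw [Fintype.sum_sum_type]
    simp only [Sum.elim_inl, Sum.elim_inr, neg_mul]
    rw [sub_eq_add_neg, ← Finset.sum_neg_distrib]
    rw [add_comm]
  -- general solutions and the homogeneous Wronskian identity
  set uy : (Fin m ⊕ Fin m → ℂ) → ℕ → Fin m → ℂ := fun c n =>
    matSol a b zc 1 0 n *ᵥ (fun i => c (Sum.inl i)) +
      matSol a b zc 0 1 n *ᵥ (fun i => c (Sum.inr i)) with huy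
  have huy_rec : ∀ (c : Fin m ⊕ Fin m → ℂ) (k : ℕ),
      AN (k+1) *ᵥ uy c (k+2) = SN (k+1) *ᵥ uy c (k+1) - (AN k)ᵀ *ᵥ uy c k := by
    intro c k
    simp only [hAN, hSN, huy, hcast k]
    rw [Matrix.mulVec_add, Matrix.mulVec_add, Matrix.mulVec_add,
      matSol_vec_rec a b ha_inv zc 1 0 _ k, matSol_vec_rec a b ha_inv zc 0 1 _ k]
    abel
  have huy0 : ∀ c, uy c 0 = fun i => c (Sum.inl i) := by
    intro c; funext i; simp [huy, matSol]
  have huy1 : ∀ c, uy c 1 = fun i => c (Sum.inr i) := by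
    intro c; funext i; simp [huy, matSol]
  have huyp : ∀ c, uy c p = fun i => (M₀ *ᵥ c) (Sum.inl i) := by
    intro c; funext i
    rw [hM₀]; unfold monodromy
    rw [Matrix.fromBlocks_mulVec]
    simp [huy, Function.comp_def]
  have huyp1 : ∀ c, uy c (p+1) = fun i => (M₀ *ᵥ c) (Sum.inr i) := by
    intro c; funext i
    rw [hM₀]; unfold monodromy
    rw [Matrix.fromBlocks_mulVec]
    simp [huy, Function.comp_def]
  have hvp : v p = (starRingEnd ℂ) τ₀ • v 0 := by
    funext i
    simp only [hv_def, Pi.smul_apply, smul_eq_mul, hup, hu0]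
    rw [_root_.map_mul]
  have hvp1 : v (p+1) = (starRingEnd ℂ) τ₀ • v 1 := by
    funext i
    simp only [hv_def, Pi.smul_apply, smul_eq_mul, hup1, hu1]
    rw [_root_.map_mul]
  have hweig : ∀ c : Fin m ⊕ Fin m → ℂ, w ⬝ᵥ (M₀ *ᵥ c) = τ₀ * (w ⬝ᵥ c) := by
    intro c
    have htel := wr_tel AN SN hSN_symm v (uy c) (fun _ _ => 0) hv_rec
      (fun k => by rw [huy_rec c k]; funext i; simp) p
    have hzero : ∀ k : ℕ, v (k + 1) ⬝ᵥ (fun _ : Fin m => (0:ℂ)) = 0 := by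
      intro k; simp [dotProduct]
    simp only [hzero, Finset.sum_const_zero, add_zero] at htel
    rw [hANp, hAN0, hvp, hvp1, huyp, huyp1, huy0, huy1] at htel
    rw [smul_dotProduct, smul_dotProduct, smul_eq_mul, smul_eq_mul,
      ← mul_sub, ← hw_dot (M₀ *ᵥ c), ← hw_dot c] at htel
    rw [← htel, ← mul_assoc, mul_comm τ₀ ((starRingEnd ℂ) τ₀), hτc, one_mul]
  have hsmul1 : ∀ c : Fin m ⊕ Fin m → ℂ, (τ₀ • (1 : Matrix (Fin m ⊕ Fin m) (Fin m ⊕ Fin m) ℂ)) *ᵥ c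
      = τ₀ • c := by
    intro c; rw [Matrix.smul_mulVec, Matrix.one_mulVec]
  have hwA : w ᵥ* A₀ = 0 := by
    funext j
    have hcol : (w ᵥ* A₀) j = w ⬝ᵥ (A₀ *ᵥ Pi.single j 1) := by
      rw [Matrix.mulVec_single]
      simp [Matrix.vecMul, dotProduct, mul_one]
    rw [hcol, hA₀, Matrix.sub_mulVec, dotProduct_sub, hweig, hsmul1,
      dotProduct_smul, smul_eq_mul, sub_self, Pi.zero_apply]
  have hw0 : w ≠ 0 := by
    intro hw0
    have hdetA0C : IsUnit A0C.det := by
      have : A0C.det = Complex.ofRealHom ((a 0).det) := by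
        rw [RingHom.map_det]
        rfl
      rw [this]
      apply IsUnit.map
      exact ha_inv 0
    have h1 : A0C *ᵥ v 1 = 0 := by
      funext j
      have := congrFun hw0 (Sum.inl j)
      simpa [hw] using this
    have h2 : v 0 ᵥ* A0C = 0 := by
      funext j
      have := congrFun hw0 (Sum.inr j)
      simpa [hw] using this
    have hv1 : v 1 = 0 := by
      have : A0C⁻¹ *ᵥ (A0C *ᵥ v 1) = v 1 := by
        rw [Matrix.mulVec_mulVec, Matrix.nonsing_inv_mul _ hdetA0C, Matrix.one_mulVec]
      rw [← this, h1, Matrix.mulVec_zero]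
    have hv0 : v 0 = 0 := by
      have : (v 0 ᵥ* A0C) ᵥ* A0C⁻¹ = v 0 := by
        rw [Matrix.vecMul_vecMul, Matrix.mul_nonsing_inv _ hdetA0C, Matrix.vecMul_one]
      rw [← this, h2, Matrix.zero_vecMul]
    apply hψ0
    funext s
    cases s with
    | inl i =>
      have h0 : (starRingEnd ℂ) (u 0 i) = 0 := congrFun hv0 i
      have h1 : u 0 i = 0 := by
        have := congrArg (starRingEnd ℂ) h0
        simpa using this
      show ψ (Sum.inl i) = 0
      calc ψ (Sum.inl i) = u 0 i := (congrFun hu0 i).symm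
        _ = 0 := h1
    | inr i =>
      have h0 : (starRingEnd ℂ) (u 1 i) = 0 := congrFun hv1 i
      have h1 : u 1 i = 0 := by
        have := congrArg (starRingEnd ℂ) h0
        simpa using this
      show ψ (Sum.inr i) = 0
      calc ψ (Sum.inr i) = u 1 i := (congrFun hu1 i).symm
        _ = 0 := h1
  obtain ⟨r₀, hr₀⟩ : ∃ r₀, w r₀ ≠ 0 := Function.ne_iff.mp hw0
  obtain ⟨c₀, hc₀⟩ : ∃ c₀, ψ c₀ ≠ 0 := Function.ne_iff.mp hψ0
  set Q : Matrix (Fin m ⊕ Fin m) (Fin m ⊕ Fin m) ℂ := (1 : Matrix _ _ ℂ).updateRow r₀ w with hQ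
  set P : Matrix (Fin m ⊕ Fin m) (Fin m ⊕ Fin m) ℂ := (1 : Matrix _ _ ℂ).updateCol c₀ ψ with hP
  have hdetQ : Q.det = w r₀ := det_updateRow_one r₀ w
  have hdetP : P.det = ψ c₀ := det_updateColumn_one c₀ ψ
  have hQrow : ∀ k, Q r₀ k = w k := fun k => by rw [hQ, Matrix.updateRow_self]
  have hPcol : ∀ k, P k c₀ = ψ k := fun k => by rw [hP, Matrix.updateCol_self]
  have hArow : ∀ j, (Q * A₀ * P) r₀ j = 0 := by
    intro j
    rw [Matrix.mul_assoc, Matrix.mul_apply]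
    have : ∀ k, Q r₀ k * (A₀ * P) k j = w k * (A₀ * P) k j := fun k => by rw [hQrow k]
    rw [Finset.sum_congr rfl (fun k _ => this k)]
    have : (w ᵥ* (A₀ * P)) j = 0 := by
      rw [← Matrix.vecMul_vecMul, hwA, Matrix.zero_vecMul]
      rfl
    rw [← this]
    rfl
  have hAcol : ∀ i, (Q * A₀ * P) i c₀ = 0 := by
    intro i
    rw [Matrix.mul_apply]
    have : ∀ k, (Q * A₀) i k * P k c₀ = (Q * A₀) i k * ψ k := fun k => by rw [hPcol k]
    rw [Finset.sum_congr rfl (fun k _ => this k)]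
    have : ((Q * A₀) *ᵥ ψ) i = 0 := by
      rw [← Matrix.mulVec_mulVec, hψ, Matrix.mulVec_zero]
      rfl
    rw [← this]
    rfl
  -- the τ-side: adjugate factor is nonzero
  set Astar : Matrix (Fin m ⊕ Fin m) (Fin m ⊕ Fin m) ℂ := Q * A₀ * P with hAstar
  set Nτ : Matrix (Fin m ⊕ Fin m) (Fin m ⊕ Fin m) (Polynomial ℂ) :=
    (Q.map Polynomial.C) * ((M₀.map Polynomial.C) -
      (X : Polynomial ℂ) • (1 : Matrix (Fin m ⊕ Fin m) (Fin m ⊕ Fin m) (Polynomial ℂ))) *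
      (P.map Polynomial.C) with hNτ
  have hmmτ : ∀ M : Matrix (Fin m ⊕ Fin m) (Fin m ⊕ Fin m) (Polynomial ℂ),
      M.map (fun q => q.eval τ₀) = (evalRingHom τ₀).mapMatrix M := fun _ => rfl
  have hQev : (Q.map Polynomial.C).map (fun q => q.eval τ₀) = Q := by
    ext i j; simp [Matrix.map_apply]
  have hPev : (P.map Polynomial.C).map (fun q => q.eval τ₀) = P := by
    ext i j; simp [Matrix.map_apply]
  have hMev : ((M₀.map Polynomial.C) -
      (X : Polynomial ℂ) • (1 : Matrix (Fin m ⊕ Fin m) (Fin m ⊕ Fin m) (Polynomial ℂ))).map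
        (fun q => q.eval τ₀) = A₀ := by
    ext i j
    by_cases h : i = j <;>
      simp [Matrix.map_apply, Matrix.sub_apply, Matrix.smul_apply, Matrix.one_apply, h, hA₀]
  have hNτ_eval : Nτ.map (fun q => q.eval τ₀) = Astar := by
    rw [hNτ, hmmτ, _root_.map_mul, _root_.map_mul, ← hmmτ, ← hmmτ, ← hmmτ, hQev, hPev, hMev,
      hAstar]
  have hrowτ : ∀ j, (Nτ r₀ j).eval τ₀ = 0 := by
    intro j
    calc (Nτ r₀ j).eval τ₀ = (Nτ.map (fun q => q.eval τ₀)) r₀ j := rfl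
      _ = Astar r₀ j := by rw [hNτ_eval]
      _ = 0 := hArow j
  have hcolτ : ∀ i, (Nτ i c₀).eval τ₀ = 0 := by
    intro i
    calc (Nτ i c₀).eval τ₀ = (Nτ.map (fun q => q.eval τ₀)) i c₀ := rfl
      _ = Astar i c₀ := by rw [hNτ_eval]
      _ = 0 := hAcol i
  have hkeyτ := key_det_deriv Nτ τ₀ r₀ c₀ hrowτ hcolτ
  rw [hNτ_eval] at hkeyτ
  have hdetNτ : Nτ.det = Polynomial.C (Q.det * P.det) * DpolyTau a b p zc := by
    rw [hNτ, Matrix.det_mul, Matrix.det_mul]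
    have hQd : (Q.map Polynomial.C).det = Polynomial.C Q.det := by
      rw [RingHom.map_det]; rfl
    have hPd : (P.map Polynomial.C).det = Polynomial.C P.det := by
      rw [RingHom.map_det]; rfl
    have hDd : ((M₀.map Polynomial.C) -
        (X : Polynomial ℂ) • (1 : Matrix (Fin m ⊕ Fin m) (Fin m ⊕ Fin m) (Polynomial ℂ))).det
        = DpolyTau a b p zc := by
      unfold DpolyTau
      rw [← hM₀]
    rw [hQd, hPd, hDd, _root_.map_mul]
    ring
  have hadj_ne : Astar.adjugate c₀ r₀ ≠ 0 := by
    intro h0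
    rw [h0, mul_zero] at hkeyτ
    rw [hdetNτ] at hkeyτ
    rw [derivative_mul, derivative_C, zero_mul, zero_add,
      Polynomial.eval_mul, Polynomial.eval_C] at hkeyτ
    rcases mul_eq_zero.mp hkeyτ with h | h
    · rcases mul_eq_zero.mp h with h' | h'
      · rw [hdetQ] at h'; exact hr₀ h'
      · rw [hdetP] at h'; exact hc₀ h'
    · exact hDTder h
  -- the z-side polynomial matrix
  set Nz : Matrix (Fin m ⊕ Fin m) (Fin m ⊕ Fin m) (Polynomial ℂ) :=
    (Q.map Polynomial.C) * ((polyMon a b p) - (Polynomial.C τ₀) •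
      (1 : Matrix (Fin m ⊕ Fin m) (Fin m ⊕ Fin m) (Polynomial ℂ))) * (P.map Polynomial.C)
    with hNz
  have hmmz : ∀ (z : ℂ) (M : Matrix (Fin m ⊕ Fin m) (Fin m ⊕ Fin m) (Polynomial ℂ)),
      M.map (fun q => q.eval z) = (evalRingHom z).mapMatrix M := fun _ _ => rfl
  have hQevz : ∀ z : ℂ, (Q.map Polynomial.C).map (fun q => q.eval z) = Q := by
    intro z; ext i j; simp [Matrix.map_apply]
  have hPevz : ∀ z : ℂ, (P.map Polynomial.C).map (fun q => q.eval z) = P := by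
    intro z; ext i j; simp [Matrix.map_apply]
  have hmz : ∀ z : ℂ, ((polyMon a b p) - (Polynomial.C τ₀) •
      (1 : Matrix (Fin m ⊕ Fin m) (Fin m ⊕ Fin m) (Polynomial ℂ))).map (fun q => q.eval z)
      = monodromy a b p z - τ₀ • (1 : Matrix (Fin m ⊕ Fin m) (Fin m ⊕ Fin m) ℂ) := by
    intro z
    rw [hmmz, map_sub, ← hmmz, ← hmmz, polyMon_eval]
    congr 1
    ext i j
    by_cases h : i = j <;>
      simp [Matrix.map_apply, Matrix.smul_apply, Matrix.one_apply, h]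
  have hNz_eval : Nz.map (fun q => q.eval zc) = Astar := by
    rw [hNz, hmmz, _root_.map_mul, _root_.map_mul, ← hmmz, ← hmmz, ← hmmz, hQevz, hPevz, hmz,
      ← hM₀, ← hA₀, hAstar]
  have hrowz : ∀ j, (Nz r₀ j).eval zc = 0 := by
    intro j
    calc (Nz r₀ j).eval zc = (Nz.map (fun q => q.eval zc)) r₀ j := rfl
      _ = Astar r₀ j := by rw [hNz_eval]
      _ = 0 := hArow j
  have hcolz : ∀ i, (Nz i c₀).eval zc = 0 := by
    intro i
    calc (Nz i c₀).eval zc = (Nz.map (fun q => q.eval zc)) i c₀ := rfl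
      _ = Astar i c₀ := by rw [hNz_eval]
      _ = 0 := hAcol i
  have hkeyz := key_det_deriv Nz zc r₀ c₀ hrowz hcolz
  rw [hNz_eval] at hkeyz
  set DzP : Polynomial ℂ := ((polyMon a b p) - (Polynomial.C τ₀) •
    (1 : Matrix (Fin m ⊕ Fin m) (Fin m ⊕ Fin m) (Polynomial ℂ))).det with hDzP
  have hdetNz : Nz.det = Polynomial.C (Q.det * P.det) * DzP := by
    rw [hNz, Matrix.det_mul, Matrix.det_mul]
    have hQd : (Q.map Polynomial.C).det = Polynomial.C Q.det := by
      rw [RingHom.map_det]; rfl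
    have hPd : (P.map Polynomial.C).det = Polynomial.C P.det := by
      rw [RingHom.map_det]; rfl
    rw [hQd, hPd, _root_.map_mul]
    ring
  -- the function z ↦ D(z,τ₀) is the evaluation of DzP
  have hDfun : (fun z : ℂ => Dfun a b p z τ₀) = fun z : ℂ => DzP.eval z := by
    funext z
    show (monodromy a b p z - τ₀ • 1).det = DzP.eval z
    rw [← hmz z, hDzP, hmmz]
    exact (RingHom.map_det (evalRingHom z) _).symm
  rw [hDfun, Polynomial.deriv]
  -- the derivative entry is the Green pairing
  set Md : Matrix (Fin m ⊕ Fin m) (Fin m ⊕ Fin m) ℂ :=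
    ((polyMon a b p).map (fun q => derivative q)).map (fun q => q.eval zc) with hMd
  have hNzd : (Nz r₀ c₀).derivative.eval zc = w ⬝ᵥ (Md *ᵥ ψ) := by
    have hentry : Nz r₀ c₀ = ∑ l, ∑ k, Polynomial.C (w k) *
        ((polyMon a b p - (Polynomial.C τ₀) •
          (1 : Matrix (Fin m ⊕ Fin m) (Fin m ⊕ Fin m) (Polynomial ℂ))) k l) *
        Polynomial.C (ψ l) := by
      rw [hNz, Matrix.mul_apply]
      apply Finset.sum_congr rfl
      intro l _
      rw [Matrix.mul_apply, Finset.sum_mul]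
      apply Finset.sum_congr rfl
      intro k _
      simp [Matrix.map_apply, hQrow k, hPcol l]
    rw [hentry]
    simp only [derivative_sum, Polynomial.eval_finset_sum]
    have hterm : ∀ l k, (derivative (Polynomial.C (w k) *
        ((polyMon a b p - (Polynomial.C τ₀) •
          (1 : Matrix (Fin m ⊕ Fin m) (Fin m ⊕ Fin m) (Polynomial ℂ))) k l) *
        Polynomial.C (ψ l))).eval zc = w k * Md k l * ψ l := by
      intro l k
      rw [derivative_mul, derivative_mul, derivative_C, zero_mul, zero_add, derivative_C,
        mul_zero, add_zero]
      have hsub : derivative ((polyMon a b p - (Polynomial.C τ₀) •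
          (1 : Matrix (Fin m ⊕ Fin m) (Fin m ⊕ Fin m) (Polynomial ℂ))) k l)
          = derivative ((polyMon a b p) k l) := by
        rw [Matrix.sub_apply, derivative_sub]
        have : derivative (((Polynomial.C τ₀) •
            (1 : Matrix (Fin m ⊕ Fin m) (Fin m ⊕ Fin m) (Polynomial ℂ))) k l) = 0 := by
          by_cases h : k = l <;>
            simp [Matrix.smul_apply, Matrix.one_apply, h]
        rw [this, sub_zero]
      rw [hsub]
      simp [Matrix.map_apply, hMd]
    rw [Finset.sum_congr rfl (fun l _ => Finset.sum_congr rfl (fun k _ => hterm l k))]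
    rw [Finset.sum_comm]
    simp only [dotProduct, Matrix.mulVec, Finset.mul_sum]
    apply Finset.sum_congr rfl
    intro k _
    apply Finset.sum_congr rfl
    intro l _
    ring
  -- identify (Md *ᵥ ψ) with the derivative sequence g
  have hMdblocks : Md = Matrix.fromBlocks
      (((matSolP a b (1 : Matrix (Fin m) (Fin m) ℂ) 0 p).map (fun q => derivative q)).map
        (fun q => q.eval zc))
      (((matSolP a b (0 : Matrix (Fin m) (Fin m) ℂ) 1 p).map (fun q => derivative q)).map
        (fun q => q.eval zc))
      (((matSolP a b (1 : Matrix (Fin m) (Fin m) ℂ) 0 (p+1)).map (fun q => derivative q)).map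
        (fun q => q.eval zc))
      (((matSolP a b (0 : Matrix (Fin m) (Fin m) ℂ) 1 (p+1)).map (fun q => derivative q)).map
        (fun q => q.eval zc)) := by
    rw [hMd]
    unfold polyMon
    rw [Matrix.fromBlocks_map, Matrix.fromBlocks_map]
  have hMdψ_inl : (fun i => (Md *ᵥ ψ) (Sum.inl i)) = g p := by
    funext i
    rw [hMdblocks, Matrix.fromBlocks_mulVec]
    simp [hg_def, hx0, hx1, Function.comp_def]
  have hMdψ_inr : (fun i => (Md *ᵥ ψ) (Sum.inr i)) = g (p+1) := by
    funext i
    rw [hMdblocks, Matrix.fromBlocks_mulVec]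
    simp [hg_def, hx0, hx1, Function.comp_def]
  -- Green identity for the derivative sequence
  have htelg := wr_tel AN SN hSN_symm v g u hv_rec hg_rec p
  have hg1z : v 0 ⬝ᵥ (AN 0 *ᵥ g 1) - v 1 ⬝ᵥ ((AN 0)ᵀ *ᵥ g 0) = 0 := by
    rw [hg0, hg1, Matrix.mulVec_zero, Matrix.mulVec_zero, dotProduct_zero,
      dotProduct_zero, sub_zero]
  rw [hg1z, zero_add, hANp, hvp, hvp1] at htelg
  rw [smul_dotProduct, smul_dotProduct, smul_eq_mul, smul_eq_mul,
    ← mul_sub] at htelg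
  have hgreen : w ⬝ᵥ (Md *ᵥ ψ) = τ₀ * ∑ k ∈ Finset.range p, v (k+1) ⬝ᵥ u (k+1) := by
    rw [hw_dot (Md *ᵥ ψ), hMdψ_inl, hMdψ_inr, ← htelg, ← mul_assoc,
      mul_comm τ₀ ((starRingEnd ℂ) τ₀), hτc, one_mul]
  -- the sum is a nonzero real number
  have hterm2 : ∀ n, v n ⬝ᵥ u n = ((∑ i, Complex.normSq (u n i) : ℝ) : ℂ) := by
    intro n
    rw [Complex.ofReal_sum]
    simp only [dotProduct, hv_def]
    apply Finset.sum_congr rfl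
    intro i _
    rw [Complex.normSq_eq_conj_mul_self]
  set T : ℝ := ∑ k ∈ Finset.range p, ∑ i, Complex.normSq (u (k+1) i) with hT
  have hsumT : ∑ k ∈ Finset.range p, v (k+1) ⬝ᵥ u (k+1) = (T : ℂ) := by
    rw [hT, Complex.ofReal_sum]
    exact Finset.sum_congr rfl (fun k _ => hterm2 (k+1))
  have hTne : T ≠ 0 := by
    intro hT0
    have hall : ∀ k ∈ Finset.range p, ∑ i, Complex.normSq (u (k+1) i) = 0 := by
      intro k hk
      refine (Finset.sum_eq_zero_iff_of_nonneg ?_).mp hT0 k hk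
      intro k _
      exact Finset.sum_nonneg fun i _ => Complex.normSq_nonneg _
    have huzero : ∀ k, k ∈ Finset.range p → ∀ i, u (k+1) i = 0 := by
      intro k hk i
      have h := (Finset.sum_eq_zero_iff_of_nonneg
        (fun i _ => Complex.normSq_nonneg (u (k+1) i))).mp (hall k hk) i (Finset.mem_univ i)
      exact Complex.normSq_eq_zero.mp h
    have hu1z : ∀ i, u 1 i = 0 := huzero 0 (Finset.mem_range.mpr hp) 
    have hupz : ∀ i, u p i = 0 := by
      intro i
      have h1 : p - 1 ∈ Finset.range p := Finset.mem_range.mpr (Nat.sub_lt hp one_pos)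
      have h2 : p - 1 + 1 = p := Nat.succ_pred_eq_of_pos hp
      have := huzero (p-1) h1 i
      rwa [h2] at this
    apply hψ0
    funext st
    cases st with
    | inl i =>
      show ψ (Sum.inl i) = 0
      have h := congrFun hup i
      rw [hupz i] at h
      have : τ₀ * ψ (Sum.inl i) = 0 := h.symm
      rcases mul_eq_zero.mp this with h' | h'
      · exact absurd h' hτ0
      · exact h'
    | inr i =>
      show ψ (Sum.inr i) = 0
      have h := hu1z i
      rw [congrFun hu1 i] at h
      exact h
  -- final assembly
  intro hfin
  have hL : (Nz.det).derivative.eval zc = 0 := by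
    rw [hdetNz, derivative_mul, derivative_C, zero_mul, zero_add, Polynomial.eval_mul,
      Polynomial.eval_C, hfin, mul_zero]
  rw [hkeyz, hNzd, hgreen, hsumT] at hL
  rcases mul_eq_zero.mp hL with h | h
  · rcases mul_eq_zero.mp h with h' | h'
    · exact hτ0 h'
    · exact hTne (by exact_mod_cast h')
  · exact hadj_ne h
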